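/- Let (V,E,c) be a connected network with V infinite, and Δ the associated graph Laplacian. If ξ : V → ℂ is square-summable (∑_{x∈V} |ξ(x)|² < ∞) and harmonic, i.e. (Δξ)(x) = 0 for every x ∈ V, then ξ = 0. In other words, the ℓ² kernel of the graph Laplacian on an infinite connected network is trivial. -/

import Mathlib

/-- An (infinite) electrical network: a countable graph `(V, E)` in which every vertex has a
finite, nonempty set of neighbors, no self-loops, together with a symmetric positive conductance
function `c` on the edges (extended by `0` off the edge set). -/
structure Network (V : Type*) where
  adj : V → V → Prop
  adj_symm : ∀ x y, adj x y ↔ adj y x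
  adj_irrefl : ∀ x, ¬ adj x x
  nbhd_finite : ∀ x, {y | adj x y}.Finite
  nbhd_nonempty : ∀ x, ∃ y, adj x y
  c : V → V → ℝ
  c_pos : ∀ x y, adj x y → 0 < c x y
  c_symm : ∀ x y, c x y = c y x
  c_eq_zero : ∀ x y, ¬ adj x y → c x y = 0

namespace Network

variable {V : Type*}

/-- The graph Laplacian `(Δu)(x) = ∑_{y ~ x} c x y (u x − u y)`; the sum has only finitely many
nonzero terms since `c x y = 0` unless `y` is one of the finitely many neighbors of `x`. -/
noncomputable def lap (N : Network V) (u : V → ℂ) (x : V) : ℂ :=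
  ∑' y : V, (N.c x y : ℂ) * (u x - u y)

/-- The (sesquilinear) energy form
`E_c(u, v) = (1/2) ∑_{(x,y)} c x y (conj (u x) − conj (u y)) (v x − v y)`. -/
noncomputable def energy (N : Network V) (u v : V → ℂ) : ℂ :=
  (1 / 2) * ∑' p : V × V,
    (N.c p.1 p.2 : ℂ) * (starRingEnd ℂ (u p.1) - starRingEnd ℂ (u p.2)) * (v p.1 - v p.2)

/-- `u : V → ℂ` has finite energy if `∑_{(x,y)} c x y |u x − u y|²` is summable. -/
def FiniteEnergy (N : Network V) (u : V → ℂ) : Prop :=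
  Summable fun p : V × V => N.c p.1 p.2 * ‖u p.1 - u p.2‖ ^ 2

/-- The quadratic energy `E_c(u, u) = (1/2) ∑_{(x,y)} c x y |u x − u y|²` as a real number. -/
noncomputable def energySq (N : Network V) (u : V → ℂ) : ℝ :=
  (1 / 2) * ∑' p : V × V, N.c p.1 p.2 * ‖u p.1 - u p.2‖ ^ 2

/-- The graph Laplacian acting on real-valued functions. -/
noncomputable def lapR (N : Network V) (u : V → ℝ) (x : V) : ℝ :=
  ∑' y : V, N.c x y * (u x - u y)

/-- The real energy form `E_c(u, v) = (1/2) ∑_{(x,y)} c x y (u x − u y)(v x − v y)`. -/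
noncomputable def energyR (N : Network V) (u v : V → ℝ) : ℝ :=
  (1 / 2) * ∑' p : V × V, N.c p.1 p.2 * (u p.1 - u p.2) * (v p.1 - v p.2)

/-- The network is connected: any two vertices are joined by a finite path of edges. -/
def Connected (N : Network V) : Prop :=
  ∀ x y : V, ∃ (n : ℕ) (p : ℕ → V), p 0 = x ∧ p n = y ∧ ∀ i < n, N.adj (p i) (p (i + 1))

end Network


open Complex in
/-- Maximum principle step: at a global max of `‖ξ‖`, harmonicity forces neighbors equal. -/
lemma Network.step {V : Type*} (N : Network V) (ξ : V → ℂ)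
    (hharm : ∀ x : V, N.lap ξ x = 0) (x : V)
    (hmax : ∀ z : V, ‖ξ z‖ ≤ ‖ξ x‖) {y : V} (hadj : N.adj x y) : ξ y = ξ x := by
  classical
  set t : Finset V := (N.nbhd_finite x).toFinset with ht
  have hmem : ∀ z, z ∈ t ↔ N.adj x z := by
    intro z; simp [ht, Set.Finite.mem_toFinset]
  have hlap : ∑ z ∈ t, (N.c x z : ℂ) * (ξ x - ξ z) = 0 := by
    rw [← tsum_eq_sum (L := SummationFilter.unconditional V)]
    · exact hharm x
    · intro b hb
      have : N.c x b = 0 := N.c_eq_zero x b (fun h => hb ((hmem b).2 h))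
      simp [this]
  -- multiply by conj (ξ x) and take real parts
  have hsum : ∑ z ∈ t, N.c x z * ((starRingEnd ℂ (ξ x)) * (ξ x - ξ z)).re = 0 := by
    have h1 : ((starRingEnd ℂ (ξ x)) * ∑ z ∈ t, (N.c x z : ℂ) * (ξ x - ξ z)).re = 0 := by
      rw [hlap]; simp
    rw [Finset.mul_sum, Complex.re_sum] at h1
    rw [← h1]
    apply Finset.sum_congr rfl
    intro z _
    have : (starRingEnd ℂ) (ξ x) * ((N.c x z : ℂ) * (ξ x - ξ z))
        = (N.c x z : ℂ) * ((starRingEnd ℂ) (ξ x) * (ξ x - ξ z)) := by ring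
    rw [this, Complex.re_ofReal_mul]
  -- each term is nonnegative
  have hterm : ∀ z : V, 0 ≤ ((starRingEnd ℂ (ξ x)) * (ξ x - ξ z)).re := by
    intro z
    have hre : ((starRingEnd ℂ (ξ x)) * ξ z).re ≤ ‖ξ x‖ ^ 2 := by
      calc ((starRingEnd ℂ (ξ x)) * ξ z).re ≤ ‖(starRingEnd ℂ (ξ x)) * ξ z‖ :=
            Complex.re_le_norm _
        _ = ‖ξ x‖ * ‖ξ z‖ := by
            simp
        _ ≤ ‖ξ x‖ * ‖ξ x‖ := by
            exact mul_le_mul_of_nonneg_left (hmax z) (norm_nonneg _)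
        _ = ‖ξ x‖ ^ 2 := by ring
    have hxx : ((starRingEnd ℂ (ξ x)) * ξ x).re = ‖ξ x‖ ^ 2 := by
      rw [mul_comm, Complex.mul_conj, Complex.ofReal_re, Complex.normSq_eq_norm_sq]
    have : ((starRingEnd ℂ (ξ x)) * (ξ x - ξ z)).re
        = ((starRingEnd ℂ (ξ x)) * ξ x).re - ((starRingEnd ℂ (ξ x)) * ξ z).re := by
      rw [mul_sub]; simp
    rw [this, hxx]; linarith
  have hnn : ∀ z ∈ t, 0 ≤ N.c x z * ((starRingEnd ℂ (ξ x)) * (ξ x - ξ z)).re := by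
    intro z hz
    exact mul_nonneg (le_of_lt (N.c_pos x z ((hmem z).1 hz))) (hterm z)
  have hzero := (Finset.sum_eq_zero_iff_of_nonneg hnn).1 hsum
  have hy : ((starRingEnd ℂ (ξ x)) * (ξ x - ξ y)).re = 0 := by
    have hyt : y ∈ t := (hmem y).2 hadj
    have := hzero y hyt
    have hc := N.c_pos x y hadj
    rcases mul_eq_zero.1 this with h | h
    · exact absurd h (ne_of_gt hc)
    · exact h
  -- conclude via normSq of difference
  have hre : ((starRingEnd ℂ (ξ x)) * ξ y).re = ‖ξ x‖ ^ 2 := by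
    have hxx : ((starRingEnd ℂ (ξ x)) * ξ x).re = ‖ξ x‖ ^ 2 := by
      rw [mul_comm, Complex.mul_conj, Complex.ofReal_re, Complex.normSq_eq_norm_sq]
    have : ((starRingEnd ℂ (ξ x)) * (ξ x - ξ y)).re
        = ((starRingEnd ℂ (ξ x)) * ξ x).re - ((starRingEnd ℂ (ξ x)) * ξ y).re := by
      rw [mul_sub]; simp
    rw [this, hxx] at hy; linarith
  have hns : Complex.normSq (ξ x - ξ y) ≤ 0 := by
    have hswap : (ξ x * (starRingEnd ℂ) (ξ y)).re = ((starRingEnd ℂ (ξ x)) * ξ y).re := by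
      have : ξ x * (starRingEnd ℂ) (ξ y) = (starRingEnd ℂ) ((starRingEnd ℂ (ξ x)) * ξ y) := by
        rw [map_mul]; simp [mul_comm]
      rw [this, Complex.conj_re]
    have hsq : Complex.normSq (ξ x) = ‖ξ x‖ ^ 2 := by
      simp [Complex.normSq_eq_norm_sq]
    have hsqy : Complex.normSq (ξ y) = ‖ξ y‖ ^ 2 := by
      simp [Complex.normSq_eq_norm_sq]
    have hle : ‖ξ y‖ ^ 2 ≤ ‖ξ x‖ ^ 2 :=
      pow_le_pow_left₀ (norm_nonneg _) (hmax y) 2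
    rw [Complex.normSq_sub, hswap, hre, hsq, hsqy]; linarith
  have : ξ x - ξ y = 0 := by
    have := Complex.normSq_nonneg (ξ x - ξ y)
    have h0 : Complex.normSq (ξ x - ξ y) = 0 := le_antisymm hns this
    exact Complex.normSq_eq_zero.1 h0
  exact (sub_eq_zero.1 this).symm

/-- On an infinite connected network, the `ℓ²` kernel of the graph Laplacian
is trivial: if `ξ : V → ℂ` is square-summable and harmonic (`(Δξ)(x) = 0` for every `x`), then
`ξ = 0`. -/
theorem stmt_19 {V : Type*} [Countable V] [Infinite V] (N : Network V) (hconn : N.Connected)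
    (ξ : V → ℂ) (hl2 : Summable fun x : V => ‖ξ x‖ ^ 2)
    (hharm : ∀ x : V, N.lap ξ x = 0) :
    ξ = 0 := by
  classical
  by_contra hne
  obtain ⟨x0, hx0⟩ : ∃ x0, ξ x0 ≠ 0 := by
    by_contra h
    push_neg at h
    exact hne (funext fun z => h z)
  have hpos : 0 < ‖ξ x0‖ ^ 2 := by
    have := norm_pos_iff.2 hx0
    positivity
  -- the set of vertices with large norm is finite
  have hfin : {z : V | ‖ξ x0‖ ^ 2 ≤ ‖ξ z‖ ^ 2}.Finite := by
    have h := hl2.tendsto_cofinite_zero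
    have hev : ∀ᶠ z in Filter.cofinite, ‖ξ z‖ ^ 2 < ‖ξ x0‖ ^ 2 :=
      h.eventually (gt_mem_nhds hpos)
    have := Filter.eventually_cofinite.1 hev
    convert this using 1
    ext z; simp [not_lt]
  set S : Finset V := hfin.toFinset with hS
  have hx0S : x0 ∈ S := by simp [hS, Set.Finite.mem_toFinset]
  obtain ⟨x, hxS, hxmax⟩ := Finset.exists_max_image S (fun z => ‖ξ z‖) ⟨x0, hx0S⟩
  -- x is a global maximum of ‖ξ‖
  have hmax : ∀ z : V, ‖ξ z‖ ≤ ‖ξ x‖ := by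
    intro z
    by_cases hz : z ∈ S
    · exact hxmax z hz
    · have hz' : ‖ξ z‖ ^ 2 < ‖ξ x0‖ ^ 2 := by
        have : z ∉ {w : V | ‖ξ x0‖ ^ 2 ≤ ‖ξ w‖ ^ 2} := by
          intro h; exact hz (by simp [hS, Set.Finite.mem_toFinset]; exact h)
        simpa [not_le] using this
      have h1 : ‖ξ z‖ < ‖ξ x0‖ := by
        nlinarith [norm_nonneg (ξ z), norm_nonneg (ξ x0)]
      exact le_trans (le_of_lt h1) (hxmax x0 hx0S)
  -- ξ is constant by connectedness and the maximum principle
  have hconst : ∀ y : V, ξ y = ξ x := by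
    intro y
    obtain ⟨n, p, hp0, hpn, hpath⟩ := hconn x y
    have key : ∀ i, i ≤ n → ξ (p i) = ξ x := by
      intro i
      induction i with
      | zero => intro _; rw [hp0]
      | succ k ih =>
        intro hk
        have hkn : k < n := Nat.lt_of_succ_le hk
        have hξk : ξ (p k) = ξ x := ih (le_of_lt hkn)
        have hmaxk : ∀ z : V, ‖ξ z‖ ≤ ‖ξ (p k)‖ := by
          intro z; rw [hξk]; exact hmax z
        have := N.step ξ hharm (p k) hmaxk (hpath k hkn)
        rw [this, hξk]
    rw [← hpn]; exact key n le_rfl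
  -- a nonzero constant is not square-summable on an infinite set
  have hl2' : Summable fun _ : V => ‖ξ x‖ ^ 2 := by
    have : (fun z : V => ‖ξ z‖ ^ 2) = fun _ : V => ‖ξ x‖ ^ 2 := by
      funext z; rw [hconst z]
    rwa [this] at hl2
  have ht : Filter.Tendsto (fun _ : V => ‖ξ x‖ ^ 2) Filter.cofinite (nhds 0) :=
    hl2'.tendsto_cofinite_zero
  have hne' : (Filter.cofinite : Filter V).NeBot := Filter.cofinite_neBot
  have h0 : ‖ξ x‖ ^ 2 = 0 := tendsto_nhds_unique tendsto_const_nhds ht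
  have hxne : ξ x ≠ 0 := fun h => hx0 (by rw [hconst x0, h])
  have : 0 < ‖ξ x‖ ^ 2 := by
    have := norm_pos_iff.2 hxne
    positivity
  linarith
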